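/- In the matrix ring ℚ[M₄(ℤ)], (P·∑_{σ∈S₄}σ)^{-∗}·J = (∑_{σ∈S₄}σ)·T₁, where P = [[1,0,0,0],[-1,1,0,0],[0,-1,1,0],[0,0,-1,1]], J = diag(0,1,1,1), T₁ = [[0,0,0,0],[0,1,0,0],[0,1,1,0],[0,1,1,1]], and for Γ = ∑aₖMₖ ∈ ℚ[GL₄(ℤ)], Γ^{-∗} = ∑aₖMₖ^{-1}. -/

import Mathlib

/-- 4×4 integer matrices. -/
abbrev M4 : Type := Matrix (Fin 4) (Fin 4) ℤ

/-- The ℚ-algebra spanned freely by 4×4 integer matrices (containing the group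
ring ℚ[GL₄(ℤ)] as the span of the invertible matrices). -/
abbrev QM4 : Type := MonoidAlgebra ℚ M4

/-- The canonical embedding of a matrix into the monoid algebra. -/
noncomputable def emb (M : M4) : QM4 := MonoidAlgebra.single M 1

/-- Permutation matrix `(δ_{i σ(j)})` of `σ ∈ S₄`. -/
def pm (σ : Equiv.Perm (Fin 4)) : M4 := Matrix.of fun i j => if i = σ j then 1 else 0

/-- The shuffle element sh(2,4) = ∑_{σ(1)<σ(2), σ(3)<σ(4)} σ. -/
noncomputable def sh24 : QM4 :=
  ∑ σ ∈ Finset.univ.filter (fun σ : Equiv.Perm (Fin 4) => σ 0 < σ 1 ∧ σ 2 < σ 3), emb (pm σ)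

/-- The element Φ. -/
noncomputable def Phi : QM4 :=
  emb 1 + emb !![1,0,0,0; 0,1,1,0; 0,0,-1,0; 0,0,1,1]
    + emb !![1,1,1,0; 0,-1,-1,0; 0,1,0,0; 0,0,1,1]

/-- The element Ψ. -/
noncomputable def Psi : QM4 :=
  emb 1 + emb !![1,0,0,0; 0,1,0,0; 0,0,1,1; 0,0,0,-1]
    + emb !![1,0,0,0; 0,1,1,1; 0,0,-1,-1; 0,0,1,0]
    + emb !![1,1,1,1; 0,-1,-1,-1; 0,1,0,0; 0,0,1,0]

/-- The inverse-star map: for Γ = ∑ aₖ Mₖ, Γ^{-∗} = ∑ aₖ Mₖ⁻¹. -/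
noncomputable def invStar (Γ : QM4) : QM4 :=
  Finsupp.sum Γ.coeff (fun M a => MonoidAlgebra.single M⁻¹ a)

/-- The 4-cycle (1234) (on Fin 4: 0↦1↦2↦3↦0). -/
def c1234 : Equiv.Perm (Fin 4) := Equiv.swap 0 1 * Equiv.swap 1 2 * Equiv.swap 2 3

/-- The sum ∑_{σ∈C₄} σ over the cyclic group C₄ = {e,(1234),(13)(24),(1432)}. -/
noncomputable def C4sum : QM4 :=
  emb 1 + emb (pm c1234) + emb (pm (c1234 ^ 2)) + emb (pm (c1234 ^ 3))

/-- J = diag(0,1,1,1). -/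
def J : M4 := !![0,0,0,0; 0,1,0,0; 0,0,1,0; 0,0,0,1]

def T1 : M4 := !![0,0,0,0; 0,1,0,0; 0,1,1,0; 0,1,1,1]
def T2 : M4 := !![0,0,0,0; 0,1,0,0; 0,0,1,0; 0,1,1,1]
def T3 : M4 := !![0,0,0,0; 0,1,0,0; 0,0,1,1; 0,1,1,0]
def T4 : M4 := !![0,0,0,0; 0,1,1,0; 0,0,0,1; 0,1,0,0]


lemma emb_mul (M N : M4) : emb M * emb N = emb (M * N) := by
  simp [emb, MonoidAlgebra.single_mul_single]

lemma invStar_emb (M : M4) : invStar (emb M) = emb M⁻¹ := by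
  simp [invStar, emb, Finsupp.sum_single_index]

lemma invStar_add (x y : QM4) : invStar (x + y) = invStar x + invStar y :=
  Finsupp.sum_add_index (by simp) (by simp)

lemma invStar_sum {α : Type*} (s : Finset α) (f : α → QM4) :
    invStar (∑ i ∈ s, f i) = ∑ i ∈ s, invStar (f i) := by
  classical
  induction s using Finset.induction with
  | empty => simp [invStar]
  | insert _ _ h ih => simp [Finset.sum_insert h, invStar_add, ih]

lemma pm_mul (σ τ : Equiv.Perm (Fin 4)) : pm σ * pm τ = pm (σ * τ) := by
  ext i j
  have h : ∀ k, (if i = σ k then (1:ℤ) else 0) * (if k = τ j then 1 else 0)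
      = if k = τ j then (if i = σ k then 1 else 0) else 0 := by
    intro k; split <;> simp
  rw [Matrix.mul_apply]
  simp only [pm, Matrix.of_apply]
  rw [Finset.sum_congr rfl (fun k _ => h k), Finset.sum_ite_eq']
  simp
  rfl

lemma pm_one : pm 1 = 1 := by
  ext i j
  simp [pm, Matrix.one_apply, eq_comm]
  rfl

lemma pm_inv (σ : Equiv.Perm (Fin 4)) : (pm σ)⁻¹ = pm σ⁻¹ := by
  refine Matrix.inv_eq_right_inv ?_
  rw [pm_mul, mul_inv_cancel, pm_one]

def Pm : M4 := !![1,0,0,0; -1,1,0,0; 0,-1,1,0; 0,0,-1,1]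
def Lm : M4 := !![1,0,0,0; 1,1,0,0; 1,1,1,0; 1,1,1,1]

lemma P_inv : Pm⁻¹ = Lm := by
  refine Matrix.inv_eq_right_inv ?_
  decide

lemma LJ : Lm * J = T1 := by decide

/-- (P·∑_{σ∈S₄}σ)^{-∗}·J = (∑_{σ∈S₄}σ)·T₁ in ℚ[M₄(ℤ)]. -/
theorem lem_2_2_eq1 :
    invStar (emb !![1,0,0,0; -1,1,0,0; 0,-1,1,0; 0,0,-1,1]
        * ∑ σ : Equiv.Perm (Fin 4), emb (pm σ)) * emb J
      = (∑ σ : Equiv.Perm (Fin 4), emb (pm σ)) * emb T1 := by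
  have key : ∀ σ : Equiv.Perm (Fin 4),
      (Pm * pm σ)⁻¹ * J = pm σ⁻¹ * T1 := by
    intro σ
    rw [Matrix.mul_inv_rev, pm_inv, P_inv, mul_assoc, LJ]
  calc invStar (emb Pm * ∑ σ : Equiv.Perm (Fin 4), emb (pm σ)) * emb J
      = (∑ σ : Equiv.Perm (Fin 4), emb ((Pm * pm σ)⁻¹ * J)) := by
        rw [Finset.mul_sum]
        simp only [emb_mul, invStar_sum, invStar_emb, Finset.sum_mul, emb_mul]
    _ = ∑ σ : Equiv.Perm (Fin 4), emb (pm σ⁻¹ * T1) := by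
        simp only [key]
    _ = ∑ σ : Equiv.Perm (Fin 4), emb (pm σ * T1) :=
        Equiv.sum_comp (Equiv.inv (Equiv.Perm (Fin 4))) (fun σ => emb (pm σ * T1))
    _ = (∑ σ : Equiv.Perm (Fin 4), emb (pm σ)) * emb T1 := by
        rw [Finset.sum_mul]; simp only [emb_mul]
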